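/- Let p be a prime, let Λ = ℤ_p[[T]] be the ring of formal power series over the p-adic integers, and let X be a finitely generated Λ-module with torsion submodule D (the submodule of elements annihilated by some nonzero element of Λ). Assume that D/pD is finite and that X/pX is isomorphic as a Λ-module to Λ/pΛ (i.e., X/pX is a free module of rank 1 over Λ̄ = Λ/pΛ ≅ 𝔽_p[[T]]). Then X is a free Λ-module of rank 1. -/

import Mathlib

set_option maxHeartbeats 1000000


/-- Let `Λ = ℤ_p[[T]]` and `X` a finitely generated `Λ`-module with torsion submodule
`D`. If `D/pD` is finite and `X/pX ≅ Λ/pΛ` as `Λ`-modules, then `X` is a free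
`Λ`-module of rank 1. -/
theorem free_rank_one_of_mu_zero (p : ℕ) [Fact p.Prime]
    (X : Type*) [AddCommGroup X] [Module (PowerSeries ℤ_[p]) X]
    [Module.Finite (PowerSeries ℤ_[p]) X]
    (hD : Finite ((Submodule.torsion (PowerSeries ℤ_[p]) X) ⧸
      LinearMap.range (((p : PowerSeries ℤ_[p])) •
        (LinearMap.id : (Submodule.torsion (PowerSeries ℤ_[p]) X) →ₗ[PowerSeries ℤ_[p]]
          (Submodule.torsion (PowerSeries ℤ_[p]) X)))))
    (hX : Nonempty
      ((X ⧸ LinearMap.range (((p : PowerSeries ℤ_[p])) •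
          (LinearMap.id : X →ₗ[PowerSeries ℤ_[p]] X))) ≃ₗ[PowerSeries ℤ_[p]]
        (PowerSeries ℤ_[p] ⧸ Ideal.span {(p : PowerSeries ℤ_[p])}))) :
    Nonempty (X ≃ₗ[PowerSeries ℤ_[p]] PowerSeries ℤ_[p]) := by
  classical
  obtain ⟨e⟩ := hX
  set Λ := PowerSeries ℤ_[p] with hΛ
  have hp1 : (1 : ℕ) < p := (Fact.out : p.Prime).one_lt
  -- p is not a unit in ℤ_[p]
  have hpuZ : ¬ IsUnit ((p : ℕ) : ℤ_[p]) := by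
    rw [PadicInt.isUnit_iff, PadicInt.norm_p]
    intro h
    have : (p : ℝ) = 1 := by
      field_simp at h
      exact_mod_cast h.symm
    exact_mod_cast absurd this (by exact_mod_cast Nat.ne_of_gt hp1)
  -- p is not a unit in Λ
  have hpu : ¬ IsUnit ((p : ℕ) : Λ) := by
    rw [PowerSeries.isUnit_iff_constantCoeff, map_natCast]
    exact hpuZ
  -- Λ/(p) is infinite
  have hinf : Infinite (Λ ⧸ Ideal.span {((p : ℕ) : Λ)}) := by
    refine Infinite.of_injective
      (fun n : ℕ => Ideal.Quotient.mk _ ((PowerSeries.X : Λ) ^ n)) ?_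
    intro n m h
    by_contra hne
    rw [Ideal.Quotient.eq, Ideal.mem_span_singleton] at h
    obtain ⟨g, hg⟩ := h
    have hco := congrArg (PowerSeries.coeff (R := ℤ_[p]) n) hg
    rw [map_sub, PowerSeries.coeff_X_pow, PowerSeries.coeff_X_pow, if_pos rfl,
      if_neg hne, ← map_natCast (PowerSeries.C (R := ℤ_[p])) p,
      PowerSeries.coeff_C_mul, sub_zero] at hco
    exact hpuZ (IsUnit.of_mul_eq_one _ hco.symm)
  set N : Submodule Λ X := LinearMap.range (((p : Λ)) •
    (LinearMap.id : X →ₗ[Λ] X)) with hN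
  -- pick a generator x of X mod N
  obtain ⟨x, hx⟩ := Submodule.Quotient.mk_surjective N
    (e.symm (Ideal.Quotient.mk _ (1 : Λ)))
  -- N is contained in (p) • ⊤
  have hNle : N ≤ (Ideal.span {((p : ℕ) : Λ)}) • (⊤ : Submodule Λ X) := by
    rintro z ⟨y, rfl⟩
    exact Submodule.smul_mem_smul (Ideal.mem_span_singleton_self _) trivial
  -- span {x} together with pX is everything
  have hgen : (⊤ : Submodule Λ X) ≤ Submodule.span Λ {x} ⊔
      (Ideal.span {((p : ℕ) : Λ)}) • (⊤ : Submodule Λ X) := by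
    intro z _
    obtain ⟨a, ha⟩ := Ideal.Quotient.mk_surjective (e (Submodule.Quotient.mk z))
    have hz : z - a • x ∈ N := by
      rw [← Submodule.Quotient.mk_eq_zero, Submodule.Quotient.mk_sub,
        Submodule.Quotient.mk_smul, hx, sub_eq_zero]
      apply e.injective
      rw [map_smul, e.apply_symm_apply, ← ha, ← Ideal.Quotient.mk_eq_mk,
        ← Ideal.Quotient.mk_eq_mk, ← Submodule.Quotient.mk_smul, smul_eq_mul, mul_one]
    have hzz : z = a • x + (z - a • x) := by abel
    rw [hzz]
    exact Submodule.add_mem_sup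
      (Submodule.smul_mem _ _ (Submodule.mem_span_singleton_self x)) (hNle hz)
  -- Nakayama: x generates X
  have hjac : Ideal.span {((p : ℕ) : Λ)} ≤ Ideal.jacobson ⊥ := by
    rw [IsLocalRing.jacobson_eq_maximalIdeal ⊥ bot_ne_top]
    rw [Ideal.span_le, Set.singleton_subset_iff]
    exact hpu
  have hspan : Submodule.span Λ {x} = ⊤ :=
    top_le_iff.mp (Submodule.le_of_le_smul_of_le_jacobson_bot
      Module.Finite.fg_top hjac hgen)
  set φ : Λ →ₗ[Λ] X := LinearMap.toSpanSingleton Λ X x with hφ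
  have hsurj : Function.Surjective φ := by
    rw [← LinearMap.range_eq_top, ← LinearMap.span_singleton_eq_range, hspan]
  have hinj : Function.Injective φ := by
    rw [← LinearMap.ker_eq_bot]
    apply LinearMap.ker_eq_bot'.mpr
    intro a ha
    by_contra hane
    rw [hφ, LinearMap.toSpanSingleton_apply] at ha
    -- then X is all torsion
    have hax : ∀ z : X, a • z = 0 := by
      intro z
      obtain ⟨b, rfl⟩ := hsurj z
      rw [hφ, LinearMap.toSpanSingleton_apply, smul_comm, ha, smul_zero]
    have htor : Submodule.torsion Λ X = ⊤ := by
      rw [eq_top_iff]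
      intro z _
      exact (Submodule.mem_torsion_iff z).mpr
        ⟨⟨a, mem_nonZeroDivisors_of_ne_zero hane⟩, hax z⟩
    set D := Submodule.torsion Λ X
    have eqv : D ≃ₗ[Λ] X := (LinearEquiv.ofEq D ⊤ htor).trans (Submodule.topEquiv)
    have hmap : (LinearMap.range (((p : Λ)) •
        (LinearMap.id : D →ₗ[Λ] D))).map (eqv : D →ₗ[Λ] X) = N := by
      ext z
      constructor
      · rintro ⟨_, ⟨d, rfl⟩, rfl⟩
        refine ⟨eqv d, ?_⟩
        simp [map_smul]
      · rintro ⟨y, rfl⟩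
        refine ⟨(p : Λ) • eqv.symm y, ⟨eqv.symm y, rfl⟩, ?_⟩
        simp [map_smul]
    have hfin1 : Finite (X ⧸ N) :=
      Finite.of_equiv _ (Submodule.Quotient.equiv _ N eqv hmap).toEquiv
    haveI : Finite (Λ ⧸ Ideal.span {((p : ℕ) : Λ)}) :=
      Finite.of_equiv _ e.toEquiv
    exact not_finite (Λ ⧸ Ideal.span {((p : ℕ) : Λ)})
  exact ⟨(LinearEquiv.ofBijective φ ⟨hinj, hsurj⟩).symm⟩
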